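/- arXiv:1607.03958 — 4 statements merged into one kernel-verified Lean document; each statement's English description precedes it below -/
import Mathlib

section
/- Let G be a finite-gain stable system with gain γ > 0, i.e. ∫₀ᵀ y(t)ᵀy(t) dt ≤ γ² ∫₀ᵀ u(t)ᵀu(t) dt for all T. Define the transformed system via u₀ = m₁₁ u + m₁₂ y and y₀ = m₂₁ u + m₂₂ y with real constants satisfying m₁₁ = m₂₁, m₂₂ = −m₁₂, and m₁₁ ≥ m₂₂ γ > 0. Then the transformed system Σ₀: u₀ → y₀ is passive: ∫₀ᵀ u₀(t)ᵀy₀(t) dt ≥ 0 for all T ≥ 0. -/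
open MeasureTheory RealInnerProductSpace

/-- passivation by matrix transformation — passive case. -/
theorem passivation_passive {m : ℕ} (u y : ℝ → EuclideanSpace ℝ (Fin m))
    (γ m₁₁ m₁₂ m₂₁ m₂₂ : ℝ) (hγ : 0 < γ)
    (hIu : ∀ T : ℝ, IntervalIntegrable (fun t => ‖u t‖ ^ 2) volume 0 T)
    (hIy : ∀ T : ℝ, IntervalIntegrable (fun t => ‖y t‖ ^ 2) volume 0 T)
    (hIuy : ∀ T : ℝ, IntervalIntegrable (fun t => ⟪u t, y t⟫) volume 0 T)
    (hgain : ∀ T : ℝ, 0 ≤ T →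
      (∫ t in (0:ℝ)..T, ‖y t‖ ^ 2) ≤ γ ^ 2 * ∫ t in (0:ℝ)..T, ‖u t‖ ^ 2)
    (h1 : m₁₁ = m₂₁) (h2 : m₂₂ = -m₁₂) (h3 : m₂₂ * γ ≤ m₁₁) (h4 : 0 < m₂₂ * γ) :
    ∀ T : ℝ, 0 ≤ T →
      0 ≤ ∫ t in (0:ℝ)..T, ⟪m₁₁ • u t + m₁₂ • y t, m₂₁ • u t + m₂₂ • y t⟫ := by
  intro T hT
  have key : ∀ t : ℝ, ⟪m₁₁ • u t + m₁₂ • y t, m₂₁ • u t + m₂₂ • y t⟫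
      = m₁₁ ^ 2 * ‖u t‖ ^ 2 - m₂₂ ^ 2 * ‖y t‖ ^ 2 := by
    intro t
    subst h1
    have h2' : m₁₂ = -m₂₂ := by linarith
    subst h2'
    simp only [inner_add_left, inner_add_right, real_inner_smul_left,
      real_inner_smul_right, real_inner_self_eq_norm_sq,
      real_inner_comm (y t) (u t), norm_smul, mul_pow, Real.norm_eq_abs, sq_abs]
    ring
  have hrw : (∫ t in (0:ℝ)..T, ⟪m₁₁ • u t + m₁₂ • y t, m₂₁ • u t + m₂₂ • y t⟫)
      = m₁₁ ^ 2 * (∫ t in (0:ℝ)..T, ‖u t‖ ^ 2)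
        - m₂₂ ^ 2 * (∫ t in (0:ℝ)..T, ‖y t‖ ^ 2) := by
    rw [← intervalIntegral.integral_const_mul, ← intervalIntegral.integral_const_mul,
      ← intervalIntegral.integral_sub ((hIu T).const_mul _) ((hIy T).const_mul _)]
    exact intervalIntegral.integral_congr fun t _ => key t
  rw [hrw]
  have hIu0 : 0 ≤ ∫ t in (0:ℝ)..T, ‖u t‖ ^ 2 :=
    intervalIntegral.integral_nonneg hT (fun t _ => by positivity)
  have hg := hgain T hT
  have hsq : (m₂₂ * γ) * (m₂₂ * γ) ≤ m₁₁ * m₁₁ := mul_self_le_mul_self h4.le h3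
  nlinarith [mul_le_mul_of_nonneg_left hg (sq_nonneg m₂₂),
    mul_le_mul_of_nonneg_right hsq hIu0]
end

section
/- Let G be finite-gain stable with gain γ > 0 (∫₀ᵀ |y|² ≤ γ² ∫₀ᵀ |u|² for all T). Define u₀ = m₁₁u + m₁₂y, y₀ = m₂₁u + m₂₂y with m₁₁m₂₂ > m₁₂m₂₁ > 0 and m₂₁ ≥ m₂₂γ > 0. Then Σ₀: u₀ → y₀ is output strictly passive with OFP level ρ₀ = (1/2)(m₁₁/m₂₁ + m₁₂/m₂₂) > 0: ∫₀ᵀ (u₀ᵀy₀ − ρ₀ y₀ᵀy₀) dt ≥ 0 for all T ≥ 0. -/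
open MeasureTheory RealInnerProductSpace

/-- passivation by matrix transformation — OSP case with level
ρ₀ = (1/2)(m₁₁/m₂₁ + m₁₂/m₂₂). -/
theorem passivation_osp {m : ℕ} (u y : ℝ → EuclideanSpace ℝ (Fin m))
    (γ m₁₁ m₁₂ m₂₁ m₂₂ : ℝ) (hγ : 0 < γ)
    (hIu : ∀ T : ℝ, IntervalIntegrable (fun t => ‖u t‖ ^ 2) volume 0 T)
    (hIy : ∀ T : ℝ, IntervalIntegrable (fun t => ‖y t‖ ^ 2) volume 0 T)
    (hIuy : ∀ T : ℝ, IntervalIntegrable (fun t => ⟪u t, y t⟫) volume 0 T)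
    (hgain : ∀ T : ℝ, 0 ≤ T →
      (∫ t in (0:ℝ)..T, ‖y t‖ ^ 2) ≤ γ ^ 2 * ∫ t in (0:ℝ)..T, ‖u t‖ ^ 2)
    (h1 : m₁₂ * m₂₁ < m₁₁ * m₂₂) (h2 : 0 < m₁₂ * m₂₁)
    (h3 : m₂₂ * γ ≤ m₂₁) (h4 : 0 < m₂₂ * γ) :
    0 < (1/2) * (m₁₁ / m₂₁ + m₁₂ / m₂₂) ∧
    ∀ T : ℝ, 0 ≤ T →
      0 ≤ ∫ t in (0:ℝ)..T,
        (⟪m₁₁ • u t + m₁₂ • y t, m₂₁ • u t + m₂₂ • y t⟫ -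
          (1/2) * (m₁₁ / m₂₁ + m₁₂ / m₂₂) * ‖m₂₁ • u t + m₂₂ • y t‖ ^ 2) := by
  have hm22 : 0 < m₂₂ := by nlinarith
  have hm21 : 0 < m₂₁ := lt_of_lt_of_le h4 h3
  have hm12 : 0 < m₁₂ := by nlinarith
  have hm11 : 0 < m₁₁ := by nlinarith
  have hD : 0 < m₁₁ * m₂₂ - m₁₂ * m₂₁ := by linarith
  set a : ℝ := m₂₁ * (m₁₁ * m₂₂ - m₁₂ * m₂₁) / (2 * m₂₂) with ha
  set b : ℝ := m₂₂ * (m₁₁ * m₂₂ - m₁₂ * m₂₁) / (2 * m₂₁) with hb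
  have hapos : 0 < a := by positivity
  have hbpos : 0 < b := by positivity
  have key : ∀ t : ℝ,
      (⟪m₁₁ • u t + m₁₂ • y t, m₂₁ • u t + m₂₂ • y t⟫ -
        (1/2) * (m₁₁ / m₂₁ + m₁₂ / m₂₂) * ‖m₂₁ • u t + m₂₂ • y t‖ ^ 2)
      = a * ‖u t‖ ^ 2 - b * ‖y t‖ ^ 2 := by
    intro t
    have hn : ‖m₂₁ • u t + m₂₂ • y t‖ ^ 2
        = ⟪m₂₁ • u t + m₂₂ • y t, m₂₁ • u t + m₂₂ • y t⟫ :=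
      (real_inner_self_eq_norm_sq _).symm
    rw [hn]
    simp only [inner_add_left, inner_add_right, real_inner_smul_left,
      real_inner_smul_right]
    rw [real_inner_comm (y t) (u t), real_inner_self_eq_norm_sq,
      real_inner_self_eq_norm_sq]
    rw [ha, hb]
    field_simp [ha, hb]
    ring
  constructor
  · have : 0 < m₁₁ / m₂₁ := by positivity
    have : 0 < m₁₂ / m₂₂ := by positivity
    linarith
  · intro T hT
    have hcongr : (∫ t in (0:ℝ)..T,
        (⟪m₁₁ • u t + m₁₂ • y t, m₂₁ • u t + m₂₂ • y t⟫ -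
          (1/2) * (m₁₁ / m₂₁ + m₁₂ / m₂₂) * ‖m₂₁ • u t + m₂₂ • y t‖ ^ 2))
        = a * (∫ t in (0:ℝ)..T, ‖u t‖ ^ 2) - b * (∫ t in (0:ℝ)..T, ‖y t‖ ^ 2) := by
      rw [← intervalIntegral.integral_const_mul, ← intervalIntegral.integral_const_mul,
        ← intervalIntegral.integral_sub ((hIu T).const_mul a) ((hIy T).const_mul b)]
      exact intervalIntegral.integral_congr (fun t _ => key t)
    rw [hcongr]
    have hIy_le := hgain T hT
    have hIu_nonneg : 0 ≤ ∫ t in (0:ℝ)..T, ‖u t‖ ^ 2 :=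
      intervalIntegral.integral_nonneg hT (fun t _ => by positivity)
    have hab : b * γ ^ 2 ≤ a := by
      rw [ha, hb, div_mul_eq_mul_div, div_le_div_iff₀ (by positivity) (by positivity)]
      nlinarith [mul_self_le_mul_self h4.le h3, mul_pos hm22 hm22, hD]
    nlinarith [mul_le_mul_of_nonneg_left hIy_le hbpos.le]
end

section
/- Let G be finite-gain stable with gain γ > 0. Define u₀ = m₁₁u + m₁₂y, y₀ = m₂₁u + m₂₂y with m₁₂m₂₁ > m₁₁m₂₂ > 0 and m₁₁ ≥ m₁₂γ > 0. Then Σ₀: u₀ → y₀ is input strictly passive with IFP level ν₀ = (1/2)(m₂₁/m₁₁ + m₂₂/m₁₂) > 0: ∫₀ᵀ (u₀ᵀy₀ − ν₀ u₀ᵀu₀) dt ≥ 0 for all T ≥ 0. -/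
open MeasureTheory RealInnerProductSpace

/-- passivation by matrix transformation — ISP case with level
ν₀ = (1/2)(m₂₁/m₁₁ + m₂₂/m₁₂). -/
theorem passivation_isp {m : ℕ} (u y : ℝ → EuclideanSpace ℝ (Fin m))
    (γ m₁₁ m₁₂ m₂₁ m₂₂ : ℝ) (hγ : 0 < γ)
    (hIu : ∀ T : ℝ, IntervalIntegrable (fun t => ‖u t‖ ^ 2) volume 0 T)
    (hIy : ∀ T : ℝ, IntervalIntegrable (fun t => ‖y t‖ ^ 2) volume 0 T)
    (hIuy : ∀ T : ℝ, IntervalIntegrable (fun t => ⟪u t, y t⟫) volume 0 T)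
    (hgain : ∀ T : ℝ, 0 ≤ T →
      (∫ t in (0:ℝ)..T, ‖y t‖ ^ 2) ≤ γ ^ 2 * ∫ t in (0:ℝ)..T, ‖u t‖ ^ 2)
    (h1 : m₁₁ * m₂₂ < m₁₂ * m₂₁) (h2 : 0 < m₁₁ * m₂₂)
    (h3 : m₁₂ * γ ≤ m₁₁) (h4 : 0 < m₁₂ * γ) :
    0 < (1/2) * (m₂₁ / m₁₁ + m₂₂ / m₁₂) ∧
    ∀ T : ℝ, 0 ≤ T →
      0 ≤ ∫ t in (0:ℝ)..T,
        (⟪m₁₁ • u t + m₁₂ • y t, m₂₁ • u t + m₂₂ • y t⟫ -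
          (1/2) * (m₂₁ / m₁₁ + m₂₂ / m₁₂) * ‖m₁₁ • u t + m₁₂ • y t‖ ^ 2) := by
  have hm12 : 0 < m₁₂ := by nlinarith
  have hm11 : 0 < m₁₁ := by nlinarith
  have hm22 : 0 < m₂₂ := by nlinarith
  have hm21 : 0 < m₂₁ := by nlinarith
  set ν₀ : ℝ := (1/2) * (m₂₁ / m₁₁ + m₂₂ / m₁₂) with hν
  have hν0 : 0 < ν₀ := by positivity
  refine ⟨hν0, fun T hT => ?_⟩
  set c₁ : ℝ := (m₁₂ * m₂₁ - m₁₁ * m₂₂) * m₁₁ / (2 * m₁₂) with hc₁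
  set c₂ : ℝ := (m₁₂ * m₂₁ - m₁₁ * m₂₂) * m₁₂ / (2 * m₁₁) with hc₂
  have key : ∀ t : ℝ,
      (⟪m₁₁ • u t + m₁₂ • y t, m₂₁ • u t + m₂₂ • y t⟫ -
        ν₀ * ‖m₁₁ • u t + m₁₂ • y t‖ ^ 2)
      = c₁ * ‖u t‖ ^ 2 - c₂ * ‖y t‖ ^ 2 := by
    intro t
    have h1 : ⟪y t, u t⟫ = ⟪u t, y t⟫ := real_inner_comm _ _
    have h2 : ⟪u t, u t⟫ = ‖u t‖ ^ 2 := real_inner_self_eq_norm_sq _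
    have h3 : ⟪y t, y t⟫ = ‖y t‖ ^ 2 := real_inner_self_eq_norm_sq _
    rw [← real_inner_self_eq_norm_sq (m₁₁ • u t + m₁₂ • y t)]
    simp only [inner_add_left, inner_add_right, real_inner_smul_left,
      real_inner_smul_right, h1, h2, h3, hν, hc₁, hc₂]
    field_simp
    ring
  have hintg :
      (∫ t in (0:ℝ)..T,
        (⟪m₁₁ • u t + m₁₂ • y t, m₂₁ • u t + m₂₂ • y t⟫ -
          ν₀ * ‖m₁₁ • u t + m₁₂ • y t‖ ^ 2))
      = c₁ * (∫ t in (0:ℝ)..T, ‖u t‖ ^ 2) - c₂ * (∫ t in (0:ℝ)..T, ‖y t‖ ^ 2) := by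
    rw [show (fun t => ⟪m₁₁ • u t + m₁₂ • y t, m₂₁ • u t + m₂₂ • y t⟫ -
          ν₀ * ‖m₁₁ • u t + m₁₂ • y t‖ ^ 2)
        = (fun t => c₁ * ‖u t‖ ^ 2 - c₂ * ‖y t‖ ^ 2) from funext key,
      intervalIntegral.integral_sub ((hIu T).const_mul c₁) ((hIy T).const_mul c₂),
      intervalIntegral.integral_const_mul, intervalIntegral.integral_const_mul]
  rw [hintg]
  have hIu0 : 0 ≤ ∫ t in (0:ℝ)..T, ‖u t‖ ^ 2 :=
    intervalIntegral.integral_nonneg hT (fun t _ => by positivity)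
  have hg := hgain T hT
  have hD : 0 < m₁₂ * m₂₁ - m₁₁ * m₂₂ := by linarith
  have hc₂0 : 0 ≤ c₂ := by
    rw [hc₂]; exact div_nonneg (by nlinarith) (by positivity)
  have hstep : c₂ * (∫ t in (0:ℝ)..T, ‖y t‖ ^ 2)
      ≤ c₂ * (γ ^ 2 * ∫ t in (0:ℝ)..T, ‖u t‖ ^ 2) := by
    exact mul_le_mul_of_nonneg_left hg hc₂0
  have hcoef : c₂ * γ ^ 2 ≤ c₁ := by
    rw [hc₁, hc₂]
    rw [div_mul_eq_mul_div, div_le_div_iff₀ (by positivity) (by positivity)]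
    nlinarith [hD, mul_le_mul h3 h3 h4.le (h4.le.trans h3),
      mul_nonneg hD.le (sq_nonneg (m₁₂ * γ))]
  nlinarith [mul_le_mul_of_nonneg_right hcoef hIu0]
end

section
/- Let G be finite-gain stable with gain γ > 0. Fix a ∈ (0,1) and define u₀ = m₁₁u (i.e. m₁₂ = 0), y₀ = m₂₁u + m₂₂y, with m₁₁ > 0 and m₂₁ ≥ m₂₂γ/√(1−a) > 0. Then Σ₀: u₀ → y₀ is very strictly passive with levels δ₀ = (1/2)(m₁₁/m₂₁) and ε₀ = (a/2)(m₂₁/m₁₁): ∫₀ᵀ (u₀ᵀy₀ − δ₀ y₀ᵀy₀ − ε₀ u₀ᵀu₀) dt ≥ 0 for all T ≥ 0. -/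
open MeasureTheory RealInnerProductSpace

/-- passivation by matrix transformation — VSP case with levels
δ₀ = (1/2)(m₁₁/m₂₁) and ε₀ = (a/2)(m₂₁/m₁₁), taking m₁₂ = 0. -/
theorem passivation_vsp {m : ℕ} (u y : ℝ → EuclideanSpace ℝ (Fin m))
    (γ m₁₁ m₂₁ m₂₂ a : ℝ) (hγ : 0 < γ) (ha : 0 < a) (ha' : a < 1)
    (hIu : ∀ T : ℝ, IntervalIntegrable (fun t => ‖u t‖ ^ 2) volume 0 T)
    (hIy : ∀ T : ℝ, IntervalIntegrable (fun t => ‖y t‖ ^ 2) volume 0 T)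
    (hIuy : ∀ T : ℝ, IntervalIntegrable (fun t => ⟪u t, y t⟫) volume 0 T)
    (hgain : ∀ T : ℝ, 0 ≤ T →
      (∫ t in (0:ℝ)..T, ‖y t‖ ^ 2) ≤ γ ^ 2 * ∫ t in (0:ℝ)..T, ‖u t‖ ^ 2)
    (h1 : 0 < m₁₁) (h2 : m₂₂ * γ / Real.sqrt (1 - a) ≤ m₂₁)
    (h3 : 0 < m₂₂ * γ / Real.sqrt (1 - a)) :
    ∀ T : ℝ, 0 ≤ T →
      0 ≤ ∫ t in (0:ℝ)..T,
        (⟪m₁₁ • u t, m₂₁ • u t + m₂₂ • y t⟫ -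
          (1/2) * (m₁₁ / m₂₁) * ‖m₂₁ • u t + m₂₂ • y t‖ ^ 2 -
          (a/2) * (m₂₁ / m₁₁) * ‖m₁₁ • u t‖ ^ 2) := by
  intro T hT
  have hs : 0 < Real.sqrt (1 - a) := Real.sqrt_pos.2 (by linarith)
  have hm21 : 0 < m₂₁ := lt_of_lt_of_le h3 h2
  have hmg : 0 < m₂₂ * γ := by
    have := (div_pos_iff.1 h3)
    rcases this with ⟨h, _⟩ | ⟨_, h⟩
    · exact h
    · linarith
  have h2' : m₂₂ * γ ≤ m₂₁ * Real.sqrt (1 - a) := (div_le_iff₀ hs).1 h2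
  have hsq : (m₂₂ * γ) ^ 2 ≤ m₂₁ ^ 2 * (1 - a) := by
    have := mul_self_le_mul_self (le_of_lt hmg) h2'
    calc (m₂₂ * γ) ^ 2 = (m₂₂ * γ) * (m₂₂ * γ) := sq (m₂₂ * γ)
      _ ≤ (m₂₁ * Real.sqrt (1 - a)) * (m₂₁ * Real.sqrt (1 - a)) := this
      _ = m₂₁ ^ 2 * (Real.sqrt (1 - a) * Real.sqrt (1 - a)) := by ring
      _ = m₂₁ ^ 2 * (1 - a) := by
          rw [Real.mul_self_sqrt (by linarith : (0:ℝ) ≤ 1 - a)]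
  set cU : ℝ := m₁₁ * m₂₁ * (1 - a) / 2 with hcU
  set cY : ℝ := m₁₁ * m₂₂ ^ 2 / (2 * m₂₁) with hcY
  have key : ∀ t : ℝ,
      (⟪m₁₁ • u t, m₂₁ • u t + m₂₂ • y t⟫ -
        (1/2) * (m₁₁ / m₂₁) * ‖m₂₁ • u t + m₂₂ • y t‖ ^ 2 -
        (a/2) * (m₂₁ / m₁₁) * ‖m₁₁ • u t‖ ^ 2)
      = cU * ‖u t‖ ^ 2 - cY * ‖y t‖ ^ 2 := by
    intro t
    have hexp : ‖m₂₁ • u t + m₂₂ • y t‖ ^ 2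
        = m₂₁ ^ 2 * ‖u t‖ ^ 2 + 2 * (m₂₁ * m₂₂ * ⟪u t, y t⟫) + m₂₂ ^ 2 * ‖y t‖ ^ 2 := by
      rw [@norm_add_sq_real, norm_smul, norm_smul, real_inner_smul_left,
        real_inner_smul_right, mul_pow, mul_pow, Real.norm_eq_abs, Real.norm_eq_abs,
        sq_abs, sq_abs]
      ring
    have hinn : ⟪m₁₁ • u t, m₂₁ • u t + m₂₂ • y t⟫
        = m₁₁ * m₂₁ * ‖u t‖ ^ 2 + m₁₁ * m₂₂ * ⟪u t, y t⟫ := by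
      rw [inner_add_right, real_inner_smul_left, real_inner_smul_left,
        real_inner_smul_right, real_inner_smul_right, real_inner_self_eq_norm_sq]
      ring
    have hnu : ‖m₁₁ • u t‖ ^ 2 = m₁₁ ^ 2 * ‖u t‖ ^ 2 := by
      rw [norm_smul, mul_pow, Real.norm_eq_abs, sq_abs]
    rw [hexp, hinn, hnu, hcU, hcY]
    field_simp
    ring
  have hint : (∫ t in (0:ℝ)..T,
      (⟪m₁₁ • u t, m₂₁ • u t + m₂₂ • y t⟫ -
        (1/2) * (m₁₁ / m₂₁) * ‖m₂₁ • u t + m₂₂ • y t‖ ^ 2 -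
        (a/2) * (m₂₁ / m₁₁) * ‖m₁₁ • u t‖ ^ 2))
      = cU * (∫ t in (0:ℝ)..T, ‖u t‖ ^ 2) - cY * (∫ t in (0:ℝ)..T, ‖y t‖ ^ 2) := by
    rw [← intervalIntegral.integral_const_mul, ← intervalIntegral.integral_const_mul,
      ← intervalIntegral.integral_sub ((hIu T).const_mul cU) ((hIy T).const_mul cY)]
    exact intervalIntegral.integral_congr fun t _ => key t
  rw [hint]
  have hU0 : 0 ≤ ∫ t in (0:ℝ)..T, ‖u t‖ ^ 2 :=
    intervalIntegral.integral_nonneg hT (fun t _ => sq_nonneg _)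
  have hcY0 : 0 ≤ cY := by
    rw [hcY]; positivity
  have hY := hgain T hT
  have hstep : cY * (∫ t in (0:ℝ)..T, ‖y t‖ ^ 2)
      ≤ cY * γ ^ 2 * (∫ t in (0:ℝ)..T, ‖u t‖ ^ 2) := by
    calc cY * (∫ t in (0:ℝ)..T, ‖y t‖ ^ 2)
        ≤ cY * (γ ^ 2 * ∫ t in (0:ℝ)..T, ‖u t‖ ^ 2) := mul_le_mul_of_nonneg_left hY hcY0
      _ = cY * γ ^ 2 * (∫ t in (0:ℝ)..T, ‖u t‖ ^ 2) := by ring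
  have hcoef : cY * γ ^ 2 ≤ cU := by
    rw [hcY, hcU]
    rw [div_mul_eq_mul_div, div_le_div_iff₀ (by positivity) (by norm_num)]
    have h1' : 0 ≤ m₁₁ := le_of_lt h1
    nlinarith [hsq, sq_nonneg γ, sq_nonneg m₂₂]
  have : cY * γ ^ 2 * (∫ t in (0:ℝ)..T, ‖u t‖ ^ 2)
      ≤ cU * (∫ t in (0:ℝ)..T, ‖u t‖ ^ 2) := mul_le_mul_of_nonneg_right hcoef hU0
  linarith
end
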